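/- Let G be the m × m adjacency matrix of a simple graph, A = I + G, and for i ∈ [m] define the (m+3) × (m+3) row-stochastic matrix Q_i by: row 0 has entry 1 in column i (among columns 1..m); for j ∈ [m], row j has entry A_{j,i} in column m+1 and 1 - A_{j,i} in column m+2; rows m+1 and m+2 have entry 1 in column 0. For w ∈ Δ_[m] let Q_w = Σ_{i=1}^m w_i Q_i. Then any nonnegative vector ν = [x, v^T, y, z]^T (with x, y, z scalars and v an m-vector) satisfying the stationarity equation ν^T = ν^T Q_w must satisfy v = x·w and y = x·(w^T A w). -/
import Mathlib


open Matrix BigOperators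

/-- States `0, 1, …, m, m+1, m+2` of the hardness-reduction MDP (average-cost variant):
`start` is state `0`, `mid j` (for `j : Fin m`) are states `1, …, m`, `pre` is state `m+1`,
`last` is state `m+2`. -/
inductive HardState (m : ℕ) where
  | start : HardState m
  | mid : Fin m → HardState m
  | pre : HardState m
  | last : HardState m
  deriving DecidableEq, Fintype

/-- The chain `Q i` of the average-cost reduction: row `0` has a `1` in column `i` (among
columns `1..m`); row `j ∈ [m]` has `A j i` in column `m+1` and `1 - A j i` in column `m+2`;
rows `m+1` and `m+2` have a `1` in column `0`. -/
def hardChainAvg {m : ℕ} (A : Matrix (Fin m) (Fin m) ℝ) (i : Fin m) :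
    Matrix (HardState m) (HardState m) ℝ :=
  Matrix.of fun r s =>
    match r, s with
    | .start, .mid j => if j = i then 1 else 0
    | .mid j, .pre => A j i
    | .mid j, .last => 1 - A j i
    | .pre, .start => 1
    | .last, .start => 1
    | _, _ => 0

def hsEquiv (m : ℕ) : HardState m ≃ Sum (Fin m) (Fin 3) where
  toFun s := match s with
    | .mid j => .inl j
    | .start => .inr 0
    | .pre => .inr 1
    | .last => .inr 2
  invFun x := Sum.elim (fun j => .mid j) (![.start, .pre, .last]) x
  left_inv s := by cases s <;> rfl
  right_inv x := by
    rcases x with j | i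
    · rfl
    · fin_cases i <;> rfl

lemma sum_hardState {m : ℕ} (f : HardState m → ℝ) :
    ∑ s, f s = f .start + f .pre + f .last + ∑ j, f (.mid j) := by
  rw [← Equiv.sum_comp (hsEquiv m).symm f, Fintype.sum_sum_type, Fin.sum_univ_three]
  simp [hsEquiv]
  ring

/-- With `A = I + G` and `w` in the simplex, any nonnegative vector
`ν = [x, vᵀ, y, z]ᵀ` satisfying the stationarity equation `νᵀ = νᵀ Q_w` must satisfy
`v = x • w` and `y = x * (wᵀ A w)`. -/
theorem hardChainAvg_stationary {m : ℕ}
    (G : Matrix (Fin m) (Fin m) ℝ) (hGsymm : G.IsSymm)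
    (hG01 : ∀ i j, G i j = 0 ∨ G i j = 1) (hGdiag : ∀ i, G i i = 0)
    (A : Matrix (Fin m) (Fin m) ℝ) (hA : A = 1 + G)
    (w : Fin m → ℝ) (hwnonneg : ∀ i, 0 ≤ w i) (hwsum : ∑ i, w i = 1)
    (ν : HardState m → ℝ) (hνnonneg : ∀ s, 0 ≤ ν s)
    (hstat : Matrix.vecMul ν (∑ i, w i • hardChainAvg A i) = ν) :
    (∀ j : Fin m, ν (HardState.mid j) = ν HardState.start * w j) ∧
    ν HardState.pre = ν HardState.start * (w ⬝ᵥ A.mulVec w) := by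
  have hM : ∀ r s, (∑ i, w i • hardChainAvg A i) r s
      = ∑ i, w i * hardChainAvg A i r s := by
    intro r s
    simp [Matrix.sum_apply]
  have hmid : ∀ j : Fin m, ν (HardState.mid j) = ν HardState.start * w j := by
    intro j
    have h1 := congrFun hstat (HardState.mid j)
    rw [Matrix.vecMul, dotProduct] at h1
    rw [sum_hardState (fun r => ν r * (∑ i, w i • hardChainAvg A i) r (HardState.mid j))] at h1
    simp only [hM] at h1
    simp only [hardChainAvg, Matrix.of_apply] at h1
    simp [Finset.mul_sum, mul_ite] at h1
    linarith [h1]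
  refine ⟨hmid, ?_⟩
  have h2 := congrFun hstat HardState.pre
  rw [Matrix.vecMul, dotProduct] at h2
  rw [sum_hardState (fun r => ν r * (∑ i, w i • hardChainAvg A i) r HardState.pre)] at h2
  simp only [hM] at h2
  simp only [hardChainAvg, Matrix.of_apply] at h2
  simp only [mul_zero, Finset.sum_const_zero, zero_add, add_zero] at h2
  rw [← h2]
  rw [dotProduct, Finset.mul_sum]
  refine Finset.sum_congr rfl fun k _ => ?_
  rw [hmid k, Matrix.mulVec, dotProduct, Finset.mul_sum, Finset.mul_sum, Finset.mul_sum]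
  refine Finset.sum_congr rfl fun i _ => ?_
  ring
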